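/- arXiv:math/0209260 — 3 statements merged into one kernel-verified Lean document; each statement's English description precedes it below -/
import Mathlib

section
/- Let N ≥ 1, let a_1, …, a_N be pairwise distinct real numbers, and let r ∈ ℝ with r ∉ {a_1, …, a_N}. Then for all p, q ∈ ℝ^N one has the identity (∑_{j=1}^N p_j q_j/(r − a_j))^2 − (∑_{j=1}^N q_j^2/(r − a_j)) · (∑_{j=1}^N p_j^2/(r − a_j)) = ∑_{j=1}^N F_j(p,q)/(r − a_j). -/
open Finset

/-- The Gaudin function `F_j(p,q) = ∑_{k ≠ j} (p_k q_j − p_j q_k)^2/(a_k − a_j)`. -/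
noncomputable def gaudinF (N : ℕ) (a : Fin N → ℝ) (j : Fin N)
    (p q : Fin N → ℝ) : ℝ :=
  ∑ k ∈ Finset.univ.erase j, (p k * q j - p j * q k) ^ 2 / (a k - a j)

private lemma gaudin_key (pj qj pk qk A dj dk : ℝ) (hA : A ≠ 0) (hdj : dj ≠ 0)
    (hdk : dk ≠ 0) (hrel : dj - dk = A) :
    pj * qj / dj * (pk * qk / dk) - qj ^ 2 / dj * (pk ^ 2 / dk)
      + (pk * qk / dk * (pj * qj / dj) - qk ^ 2 / dk * (pj ^ 2 / dj))
    = (pk * qj - pj * qk) ^ 2 / A / dj + (pj * qk - pk * qj) ^ 2 / (-A) / dk := by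
  rw [div_mul_div_comm, div_mul_div_comm, div_sub_div_same, div_mul_div_comm,
    div_mul_div_comm, div_sub_div_same, mul_comm dk dj, ← add_div,
    div_div, div_div,
    div_add_div _ _ (mul_ne_zero hA hdj) (mul_ne_zero (neg_ne_zero.mpr hA) hdk),
    div_eq_div_iff (mul_ne_zero hdj hdk)
      (mul_ne_zero (mul_ne_zero hA hdj) (mul_ne_zero (neg_ne_zero.mpr hA) hdk))]
  linear_combination (-((pk * qj - pj * qk) ^ 2) * A * dj * dk) * hrel

theorem stmt0 (N : ℕ) (hN : 1 ≤ N) (a : Fin N → ℝ)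
    (ha : Function.Injective a) (r : ℝ) (hr : ∀ j, r ≠ a j)
    (p q : Fin N → ℝ) :
    (∑ j, p j * q j / (r - a j)) ^ 2
      - (∑ j, (q j) ^ 2 / (r - a j)) * (∑ j, (p j) ^ 2 / (r - a j))
      = ∑ j, gaudinF N a j p q / (r - a j) := by
  have hd : ∀ j : Fin N, r - a j ≠ 0 := fun j => sub_ne_zero.mpr (hr j)
  set F : Fin N → Fin N → ℝ := fun j k =>
    p j * q j / (r - a j) * (p k * q k / (r - a k))
      - q j ^ 2 / (r - a j) * (p k ^ 2 / (r - a k)) with hF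
  set G : Fin N → Fin N → ℝ := fun j k =>
    (p k * q j - p j * q k) ^ 2 / (a k - a j) / (r - a j) with hG
  have key : ∀ j k : Fin N, j ≠ k → F j k + F k j = G j k + G k j := by
    intro j k hjk
    have hajk : a k - a j ≠ 0 := sub_ne_zero.mpr fun h => hjk (ha h).symm
    have hakj : a j - a k ≠ 0 := sub_ne_zero.mpr fun h => hjk (ha h)
    simp only [hF, hG]
    rw [show a j - a k = -(a k - a j) from by ring]
    exact gaudin_key (p j) (q j) (p k) (q k) (a k - a j) (r - a j) (r - a k)
      hajk (hd j) (hd k) (by ring)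
  -- LHS equals double sum of F
  have hLHS : (∑ j, p j * q j / (r - a j)) ^ 2
      - (∑ j, (q j) ^ 2 / (r - a j)) * (∑ j, (p j) ^ 2 / (r - a j))
      = ∑ j, ∑ k, F j k := by
    rw [sq, Finset.sum_mul_sum, Finset.sum_mul_sum, ← Finset.sum_sub_distrib]
    exact Finset.sum_congr rfl fun j _ => (Finset.sum_sub_distrib _ _).symm
  have hFdiag : ∀ j : Fin N, F j j = 0 := by
    intro j; simp only [hF]; ring
  have hLHS2 : ∀ j : Fin N, ∑ k, F j k = ∑ k ∈ Finset.univ.erase j, F j k :=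
    fun j => (Finset.sum_erase _ (hFdiag j)).symm
  have hRHS : ∀ j : Fin N, gaudinF N a j p q / (r - a j)
      = ∑ k ∈ Finset.univ.erase j, G j k := by
    intro j
    rw [gaudinF, Finset.sum_div]
  rw [hLHS]
  simp only [hLHS2, hRHS]
  -- now show the two double sums over erased sets agree
  rw [← sub_eq_zero, ← Finset.sum_sub_distrib]
  have : ∀ j : Fin N, (∑ k ∈ Finset.univ.erase j, F j k)
      - (∑ k ∈ Finset.univ.erase j, G j k)
      = ∑ k, (if k = j then 0 else F j k - G j k) := by
    intro j
    rw [← Finset.sum_sub_distrib]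
    rw [← Finset.sum_erase (Finset.univ) (f := fun k => if k = j then 0 else F j k - G j k) (a := j) (by simp)]
    exact Finset.sum_congr rfl fun k hk => by
      rw [if_neg (Finset.ne_of_mem_erase hk)]
  simp only [this]
  set H : Fin N → Fin N → ℝ := fun j k => if k = j then 0 else F j k - G j k with hH
  have hanti : ∀ j k : Fin N, H j k = - H k j := by
    intro j k
    by_cases h : k = j
    · subst h; simp [hH]
    · simp only [hH, if_neg h, if_neg (Ne.symm h)]
      linarith [key j k (Ne.symm h)]
  have hcomm : ∑ j, ∑ k, H j k = ∑ k, ∑ j, H j k := Finset.sum_comm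
  have : ∑ j, ∑ k, H j k = - ∑ j, ∑ k, H j k := by
    nth_rewrite 1 [hcomm]
    rw [← Finset.sum_neg_distrib]
    exact Finset.sum_congr rfl fun k _ => by
      rw [← Finset.sum_neg_distrib]
      exact Finset.sum_congr rfl fun j _ => hanti j k
  linarith [this]
end

section
/- Let N ≥ 1, let a_1, …, a_N be pairwise distinct real numbers, and let r, s ∈ ℝ ∖ {a_1, …, a_N}. Define H_r(p,q) = (∑_{j=1}^N p_j q_j/(r − a_j))^2 − (∑_{j=1}^N q_j^2/(r − a_j)) · (∑_{j=1}^N p_j^2/(r − a_j)), and likewise H_s. Then the standard Poisson bracket satisfies {H_r, H_s}(p,q) = 0 for all (p,q) ∈ ℝ^N × ℝ^N (the classical sl(2) Gaudin Hamiltonians are in involution). -/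
open Finset

/-- Partial derivative `∂f/∂p_j` of a function on `ℝ^N × ℝ^N`. -/
noncomputable def pdP {N : ℕ} (f : (Fin N → ℝ) × (Fin N → ℝ) → ℝ) (j : Fin N)
    (x : (Fin N → ℝ) × (Fin N → ℝ)) : ℝ :=
  fderiv ℝ f x (Pi.single j 1, 0)

/-- Partial derivative `∂f/∂q_j` of a function on `ℝ^N × ℝ^N`. -/
noncomputable def pdQ {N : ℕ} (f : (Fin N → ℝ) × (Fin N → ℝ) → ℝ) (j : Fin N)
    (x : (Fin N → ℝ) × (Fin N → ℝ)) : ℝ :=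
  fderiv ℝ f x (0, Pi.single j 1)

/-- The standard Poisson bracket on `ℝ^N × ℝ^N`. -/
noncomputable def stdPoisson {N : ℕ}
    (f g : (Fin N → ℝ) × (Fin N → ℝ) → ℝ)
    (x : (Fin N → ℝ) × (Fin N → ℝ)) : ℝ :=
  ∑ j, (pdP f j x * pdQ g j x - pdQ f j x * pdP g j x)

/-- The classical `sl(2)` Gaudin Hamiltonian
`H_r(p,q) = (∑ p_j q_j/(r−a_j))² − (∑ q_j²/(r−a_j))(∑ p_j²/(r−a_j))`. -/
noncomputable def gaudinH (N : ℕ) (a : Fin N → ℝ) (r : ℝ)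
    (x : (Fin N → ℝ) × (Fin N → ℝ)) : ℝ :=
  (∑ j, x.1 j * x.2 j / (r - a j)) ^ 2
    - (∑ j, (x.2 j) ^ 2 / (r - a j)) * (∑ j, (x.1 j) ^ 2 / (r - a j))

section aux

variable {N : ℕ}

/-- coordinate projection `p_k` as a continuous linear map -/
noncomputable def Pc (k : Fin N) : ((Fin N → ℝ) × (Fin N → ℝ)) →L[ℝ] ℝ :=
  (ContinuousLinearMap.proj k).comp (ContinuousLinearMap.fst ℝ (Fin N → ℝ) (Fin N → ℝ))

/-- coordinate projection `q_k` as a continuous linear map -/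
noncomputable def Qc (k : Fin N) : ((Fin N → ℝ) × (Fin N → ℝ)) →L[ℝ] ℝ :=
  (ContinuousLinearMap.proj k).comp (ContinuousLinearMap.snd ℝ (Fin N → ℝ) (Fin N → ℝ))

lemma hasP (k : Fin N) (x : (Fin N → ℝ) × (Fin N → ℝ)) :
    HasFDerivAt (fun x : (Fin N → ℝ) × (Fin N → ℝ) => x.1 k) (Pc k) x :=
  (Pc k).hasFDerivAt

lemma hasQ (k : Fin N) (x : (Fin N → ℝ) × (Fin N → ℝ)) :
    HasFDerivAt (fun x : (Fin N → ℝ) × (Fin N → ℝ) => x.2 k) (Qc k) x :=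
  (Qc k).hasFDerivAt

lemma hasS1 (a : Fin N → ℝ) (r : ℝ) (x : (Fin N → ℝ) × (Fin N → ℝ)) :
    HasFDerivAt (fun x : (Fin N → ℝ) × (Fin N → ℝ) => ∑ j, x.1 j * x.2 j / (r - a j))
      (∑ j, (r - a j)⁻¹ • (x.1 j • Qc j + x.2 j • Pc j)) x :=
  HasFDerivAt.fun_sum fun j _ => by
    simpa [div_eq_mul_inv, smul_smul] using ((hasP j x).mul (hasQ j x)).mul_const (r - a j)⁻¹

lemma hasS2 (a : Fin N → ℝ) (r : ℝ) (x : (Fin N → ℝ) × (Fin N → ℝ)) :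
    HasFDerivAt (fun x : (Fin N → ℝ) × (Fin N → ℝ) => ∑ j, (x.2 j) ^ 2 / (r - a j))
      (∑ j, (r - a j)⁻¹ • (x.2 j • Qc j + x.2 j • Qc j)) x :=
  HasFDerivAt.fun_sum fun j _ => by
    have : HasFDerivAt (fun x : (Fin N → ℝ) × (Fin N → ℝ) => (x.2 j * x.2 j) * (r - a j)⁻¹)
        ((r - a j)⁻¹ • (x.2 j • Qc j + x.2 j • Qc j)) x := by
      simpa [smul_smul] using ((hasQ j x).mul (hasQ j x)).mul_const (r - a j)⁻¹
    simpa [pow_two, div_eq_mul_inv] using this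

lemma hasS3 (a : Fin N → ℝ) (r : ℝ) (x : (Fin N → ℝ) × (Fin N → ℝ)) :
    HasFDerivAt (fun x : (Fin N → ℝ) × (Fin N → ℝ) => ∑ j, (x.1 j) ^ 2 / (r - a j))
      (∑ j, (r - a j)⁻¹ • (x.1 j • Pc j + x.1 j • Pc j)) x :=
  HasFDerivAt.fun_sum fun j _ => by
    have : HasFDerivAt (fun x : (Fin N → ℝ) × (Fin N → ℝ) => (x.1 j * x.1 j) * (r - a j)⁻¹)
        ((r - a j)⁻¹ • (x.1 j • Pc j + x.1 j • Pc j)) x := by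
      simpa [smul_smul] using ((hasP j x).mul (hasP j x)).mul_const (r - a j)⁻¹
    simpa [pow_two, div_eq_mul_inv] using this

lemma hasGaudin (a : Fin N → ℝ) (r : ℝ) (x : (Fin N → ℝ) × (Fin N → ℝ)) :
    HasFDerivAt (gaudinH N a r)
      (((∑ j, x.1 j * x.2 j / (r - a j)) • (∑ j, (r - a j)⁻¹ • (x.1 j • Qc j + x.2 j • Pc j))
        + (∑ j, x.1 j * x.2 j / (r - a j)) • (∑ j, (r - a j)⁻¹ • (x.1 j • Qc j + x.2 j • Pc j)))
       - ((∑ j, (x.2 j) ^ 2 / (r - a j)) • (∑ j, (r - a j)⁻¹ • (x.1 j • Pc j + x.1 j • Pc j))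
        + (∑ j, (x.1 j) ^ 2 / (r - a j)) • (∑ j, (r - a j)⁻¹ • (x.2 j • Qc j + x.2 j • Qc j)))) x := by
  have h := (((hasS1 a r x).mul (hasS1 a r x)).sub ((hasS2 a r x).mul (hasS3 a r x)))
  have heq : gaudinH N a r = fun x : (Fin N → ℝ) × (Fin N → ℝ) =>
      (∑ j, x.1 j * x.2 j / (r - a j)) * (∑ j, x.1 j * x.2 j / (r - a j))
        - (∑ j, (x.2 j) ^ 2 / (r - a j)) * (∑ j, (x.1 j) ^ 2 / (r - a j)) := by
    funext y; simp [gaudinH, pow_two]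
  rw [heq]
  exact h

lemma collapse (k : Fin N) (c : Fin N → ℝ) :
    (∑ j, (if j = k then c j else 0) * 2) = c k * 2 := by
  rw [← Finset.sum_mul, Finset.sum_ite_eq' Finset.univ k c]
  simp

lemma pdP_gaudin (a : Fin N → ℝ) (r : ℝ) (k : Fin N) (x : (Fin N → ℝ) × (Fin N → ℝ)) :
    pdP (gaudinH N a r) k x =
      2 * (∑ j, x.1 j * x.2 j / (r - a j)) * (x.2 k * (r - a k)⁻¹)
        - 2 * (∑ j, (x.2 j) ^ 2 / (r - a j)) * (x.1 k * (r - a k)⁻¹) := by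
  rw [pdP, (hasGaudin a r x).fderiv]
  simp only [Pc, Qc, ContinuousLinearMap.sub_apply, ContinuousLinearMap.add_apply,
    ContinuousLinearMap.smul_apply, ContinuousLinearMap.coe_sum', Finset.sum_apply,
    ContinuousLinearMap.coe_comp', Function.comp_apply, ContinuousLinearMap.proj_apply,
    ContinuousLinearMap.coe_fst', ContinuousLinearMap.coe_snd',
    Pi.single_apply, smul_eq_mul, Pi.zero_apply]
  simp only [mul_ite, ite_mul, mul_zero, zero_mul, mul_one, mul_add, add_zero, zero_add,
    Finset.sum_ite_eq', Finset.mem_univ, if_true, div_eq_mul_inv]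
  simp only [Finset.sum_add_distrib, Finset.sum_ite_eq', Finset.mem_univ, if_true,
    Finset.sum_const_zero, mul_zero, add_zero]
  ring

lemma pdQ_gaudin (a : Fin N → ℝ) (r : ℝ) (k : Fin N) (x : (Fin N → ℝ) × (Fin N → ℝ)) :
    pdQ (gaudinH N a r) k x =
      2 * (∑ j, x.1 j * x.2 j / (r - a j)) * (x.1 k * (r - a k)⁻¹)
        - 2 * (∑ j, (x.1 j) ^ 2 / (r - a j)) * (x.2 k * (r - a k)⁻¹) := by
  rw [pdQ, (hasGaudin a r x).fderiv]
  simp only [Pc, Qc, ContinuousLinearMap.sub_apply, ContinuousLinearMap.add_apply,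
    ContinuousLinearMap.smul_apply, ContinuousLinearMap.coe_sum', Finset.sum_apply,
    ContinuousLinearMap.coe_comp', Function.comp_apply, ContinuousLinearMap.proj_apply,
    ContinuousLinearMap.coe_fst', ContinuousLinearMap.coe_snd',
    Pi.single_apply, smul_eq_mul, Pi.zero_apply]
  simp only [mul_ite, ite_mul, mul_zero, zero_mul, mul_one, mul_add, add_zero, zero_add,
    Finset.sum_ite_eq', Finset.mem_univ, if_true, div_eq_mul_inv]
  simp only [Finset.sum_add_distrib, Finset.sum_ite_eq', Finset.mem_univ, if_true,
    Finset.sum_const_zero, mul_zero, add_zero]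
  ring

end aux

theorem stmt4 (N : ℕ) (hN : 1 ≤ N) (a : Fin N → ℝ) (ha : Function.Injective a)
    (r s : ℝ) (hr : ∀ j, r ≠ a j) (hs : ∀ j, s ≠ a j) :
    ∀ x : (Fin N → ℝ) × (Fin N → ℝ),
      stdPoisson (gaudinH N a r) (gaudinH N a s) x = 0 := by
  intro x
  by_cases hrs : r = s
  · subst hrs
    unfold stdPoisson
    exact Finset.sum_eq_zero fun j _ => by ring
  set Ar := ∑ j, x.1 j * x.2 j / (r - a j) with hAr
  set Br := ∑ j, (x.2 j) ^ 2 / (r - a j) with hBr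
  set Cr := ∑ j, (x.1 j) ^ 2 / (r - a j) with hCr
  set As := ∑ j, x.1 j * x.2 j / (s - a j) with hAs
  set Bs := ∑ j, (x.2 j) ^ 2 / (s - a j) with hBs
  set Cs := ∑ j, (x.1 j) ^ 2 / (s - a j) with hCs
  have hsr : s - r ≠ 0 := sub_ne_zero.mpr (Ne.symm hrs)
  have key : ∀ k : Fin N,
      pdP (gaudinH N a r) k x * pdQ (gaudinH N a s) k x
        - pdQ (gaudinH N a r) k x * pdP (gaudinH N a s) k x
      = (s - r)⁻¹ *
          (4 * (Cr * As - Ar * Cs) * ((x.2 k) ^ 2 / (r - a k) - (x.2 k) ^ 2 / (s - a k))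
          + 4 * (Br * Cs - Cr * Bs) * (x.1 k * x.2 k / (r - a k) - x.1 k * x.2 k / (s - a k))
          + 4 * (Ar * Bs - Br * As) * ((x.1 k) ^ 2 / (r - a k) - (x.1 k) ^ 2 / (s - a k))) := by
    intro k
    have hρ : r - a k ≠ 0 := sub_ne_zero.mpr (hr k)
    have hσ : s - a k ≠ 0 := sub_ne_zero.mpr (hs k)
    rw [pdP_gaudin, pdQ_gaudin, pdP_gaudin, pdQ_gaudin, ← hAr, ← hBr, ← hCr, ← hAs, ← hBs, ← hCs]
    field_simp
    ring
  unfold stdPoisson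
  rw [Finset.sum_congr rfl fun k _ => key k]
  rw [← Finset.mul_sum]
  have hsplit :
      (∑ k, (4 * (Cr * As - Ar * Cs) * ((x.2 k) ^ 2 / (r - a k) - (x.2 k) ^ 2 / (s - a k))
          + 4 * (Br * Cs - Cr * Bs) * (x.1 k * x.2 k / (r - a k) - x.1 k * x.2 k / (s - a k))
          + 4 * (Ar * Bs - Br * As) * ((x.1 k) ^ 2 / (r - a k) - (x.1 k) ^ 2 / (s - a k))))
      = 4 * (Cr * As - Ar * Cs) * (Br - Bs)
          + 4 * (Br * Cs - Cr * Bs) * (Ar - As)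
          + 4 * (Ar * Bs - Br * As) * (Cr - Cs) := by
    rw [hAr, hBr, hCr, hAs, hBs, hCs]
    simp only [Finset.sum_add_distrib, ← Finset.mul_sum, Finset.sum_sub_distrib]
  rw [hsplit]
  ring
end

section
/- Let N ≥ 1, let a_1, …, a_N be pairwise distinct real numbers, and let (t_1, t_2) ∈ ℝ² with t_1 + a_j t_2 ≠ 0 for all j. Define z_1(p,q) = −∑_{j=1}^N p_j q_j/(t_1 + a_j t_2), z_2(p,q) = −(1/2) ∑_{j=1}^N q_j^2/(t_1 + a_j t_2), z_3(p,q) = (1/2) ∑_{j=1}^N p_j^2/(t_1 + a_j t_2). Then the weighted Poisson bracket with weights w_j = t_1 + a_j t_2 satisfies, identically on ℝ^N × ℝ^N: {z_1, z_2}^w = −2 z_2, {z_1, z_3}^w = 2 z_3, and {z_2, z_3}^w = −z_1 (i.e. (z_1, z_2, z_3) realizes the sl(2,ℝ) commutation relations, so the map (p,q) ↦ (z_1, z_2, z_3) is the moment map of the diagonal SL(2,ℝ)-action with respect to this bracket). -/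
open Finset

/-- The weighted Poisson bracket
`{f,g}^w(p,q) = ∑_j w_j (∂f/∂p_j ∂g/∂q_j − ∂f/∂q_j ∂g/∂p_j)` on `ℝ^N × ℝ^N`. -/
noncomputable def wPoisson {N : ℕ} (w : Fin N → ℝ)
    (f g : (Fin N → ℝ) × (Fin N → ℝ) → ℝ)
    (x : (Fin N → ℝ) × (Fin N → ℝ)) : ℝ :=
  ∑ j, w j * (pdP f j x * pdQ g j x - pdQ f j x * pdP g j x)

/-- `z₁(p,q) = −∑ p_j q_j/(t₁ + a_j t₂)`. -/
noncomputable def momZ₁ (N : ℕ) (a : Fin N → ℝ) (t₁ t₂ : ℝ)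
    (x : (Fin N → ℝ) × (Fin N → ℝ)) : ℝ :=
  -∑ j, x.1 j * x.2 j / (t₁ + a j * t₂)

/-- `z₂(p,q) = −(1/2)∑ q_j²/(t₁ + a_j t₂)`. -/
noncomputable def momZ₂ (N : ℕ) (a : Fin N → ℝ) (t₁ t₂ : ℝ)
    (x : (Fin N → ℝ) × (Fin N → ℝ)) : ℝ :=
  -(1 / 2) * ∑ j, (x.2 j) ^ 2 / (t₁ + a j * t₂)

/-- `z₃(p,q) = (1/2)∑ p_j²/(t₁ + a_j t₂)`. -/
noncomputable def momZ₃ (N : ℕ) (a : Fin N → ℝ) (t₁ t₂ : ℝ)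
    (x : (Fin N → ℝ) × (Fin N → ℝ)) : ℝ :=
  (1 / 2) * ∑ j, (x.1 j) ^ 2 / (t₁ + a j * t₂)

noncomputable def Pj (N : ℕ) (j : Fin N) : ((Fin N → ℝ) × (Fin N → ℝ)) →L[ℝ] ℝ :=
  (ContinuousLinearMap.proj j).comp (ContinuousLinearMap.fst ℝ _ _)

noncomputable def Qj (N : ℕ) (j : Fin N) : ((Fin N → ℝ) × (Fin N → ℝ)) →L[ℝ] ℝ :=
  (ContinuousLinearMap.proj j).comp (ContinuousLinearMap.snd ℝ _ _)

lemma termPQ {N : ℕ} (j : Fin N) (c : ℝ) (x : (Fin N → ℝ) × (Fin N → ℝ)) :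
    HasFDerivAt (fun x : (Fin N → ℝ) × (Fin N → ℝ) => x.1 j * x.2 j / c)
      (c⁻¹ • (x.1 j • Qj N j + x.2 j • Pj N j)) x := by
  have h := ((((Pj N j).hasFDerivAt (x := x)).mul ((Qj N j).hasFDerivAt)).mul_const c⁻¹)
  simp only [div_eq_mul_inv]
  refine h.congr_fderiv ?_
  rfl

lemma termQ2 {N : ℕ} (j : Fin N) (c : ℝ) (x : (Fin N → ℝ) × (Fin N → ℝ)) :
    HasFDerivAt (fun x : (Fin N → ℝ) × (Fin N → ℝ) => (x.2 j) ^ 2 / c)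
      (c⁻¹ • ((2 * x.2 j) • Qj N j)) x := by
  have h := ((((Qj N j).hasFDerivAt (x := x)).mul ((Qj N j).hasFDerivAt)).mul_const c⁻¹)
  simp only [div_eq_mul_inv, pow_two]
  refine h.congr_fderiv ?_
  simp [Qj]; module

lemma termP2 {N : ℕ} (j : Fin N) (c : ℝ) (x : (Fin N → ℝ) × (Fin N → ℝ)) :
    HasFDerivAt (fun x : (Fin N → ℝ) × (Fin N → ℝ) => (x.1 j) ^ 2 / c)
      (c⁻¹ • ((2 * x.1 j) • Pj N j)) x := by
  have h := ((((Pj N j).hasFDerivAt (x := x)).mul ((Pj N j).hasFDerivAt)).mul_const c⁻¹)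
  simp only [div_eq_mul_inv, pow_two]
  refine h.congr_fderiv ?_
  simp [Pj]; module

lemma hZ₁ (N : ℕ) (a : Fin N → ℝ) (t₁ t₂ : ℝ) (x : (Fin N → ℝ) × (Fin N → ℝ)) :
    HasFDerivAt (momZ₁ N a t₁ t₂)
      (-∑ k, (t₁ + a k * t₂)⁻¹ • (x.1 k • Qj N k + x.2 k • Pj N k)) x := by
  unfold momZ₁
  exact (HasFDerivAt.fun_sum fun k _ => termPQ k _ x).neg

lemma hZ₂ (N : ℕ) (a : Fin N → ℝ) (t₁ t₂ : ℝ) (x : (Fin N → ℝ) × (Fin N → ℝ)) :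
    HasFDerivAt (momZ₂ N a t₁ t₂)
      ((-(1/2) : ℝ) • ∑ k, (t₁ + a k * t₂)⁻¹ • ((2 * x.2 k) • Qj N k)) x := by
  unfold momZ₂
  exact (HasFDerivAt.sum fun k _ => termQ2 k _ x).const_smul _ |>.congr_of_eventuallyEq
    (by filter_upwards with y; simp [smul_eq_mul, div_eq_mul_inv, Finset.mul_sum])

lemma hZ₃ (N : ℕ) (a : Fin N → ℝ) (t₁ t₂ : ℝ) (x : (Fin N → ℝ) × (Fin N → ℝ)) :
    HasFDerivAt (momZ₃ N a t₁ t₂)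
      (((1/2) : ℝ) • ∑ k, (t₁ + a k * t₂)⁻¹ • ((2 * x.1 k) • Pj N k)) x := by
  unfold momZ₃
  exact (HasFDerivAt.sum fun k _ => termP2 k _ x).const_smul _ |>.congr_of_eventuallyEq
    (by filter_upwards with y; simp [smul_eq_mul, div_eq_mul_inv, Finset.mul_sum])

lemma pdP_Z₁ (N : ℕ) (a : Fin N → ℝ) (t₁ t₂ : ℝ) (j : Fin N) (x) :
    pdP (momZ₁ N a t₁ t₂) j x = -(x.2 j / (t₁ + a j * t₂)) := by
  rw [pdP, (hZ₁ N a t₁ t₂ x).fderiv]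
  simp [Pj, Qj, Pi.single_apply, mul_ite, Finset.sum_ite_eq', div_eq_mul_inv, mul_comm]

lemma pdQ_Z₁ (N : ℕ) (a : Fin N → ℝ) (t₁ t₂ : ℝ) (j : Fin N) (x) :
    pdQ (momZ₁ N a t₁ t₂) j x = -(x.1 j / (t₁ + a j * t₂)) := by
  rw [pdQ, (hZ₁ N a t₁ t₂ x).fderiv]
  simp [Pj, Qj, Pi.single_apply, mul_ite, Finset.sum_ite_eq', div_eq_mul_inv, mul_comm]

lemma pdP_Z₂ (N : ℕ) (a : Fin N → ℝ) (t₁ t₂ : ℝ) (j : Fin N) (x) :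
    pdP (momZ₂ N a t₁ t₂) j x = 0 := by
  rw [pdP, (hZ₂ N a t₁ t₂ x).fderiv]
  simp [Pj, Qj]

lemma pdQ_Z₂ (N : ℕ) (a : Fin N → ℝ) (t₁ t₂ : ℝ) (j : Fin N) (x) :
    pdQ (momZ₂ N a t₁ t₂) j x = -(x.2 j / (t₁ + a j * t₂)) := by
  rw [pdQ, (hZ₂ N a t₁ t₂ x).fderiv]
  simp [Pj, Qj, Pi.single_apply, mul_ite, Finset.sum_ite_eq', div_eq_mul_inv]
  ring

lemma pdP_Z₃ (N : ℕ) (a : Fin N → ℝ) (t₁ t₂ : ℝ) (j : Fin N) (x) :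
    pdP (momZ₃ N a t₁ t₂) j x = x.1 j / (t₁ + a j * t₂) := by
  rw [pdP, (hZ₃ N a t₁ t₂ x).fderiv]
  simp [Pj, Qj, Pi.single_apply, mul_ite, Finset.sum_ite_eq', div_eq_mul_inv]
  ring

lemma pdQ_Z₃ (N : ℕ) (a : Fin N → ℝ) (t₁ t₂ : ℝ) (j : Fin N) (x) :
    pdQ (momZ₃ N a t₁ t₂) j x = 0 := by
  rw [pdQ, (hZ₃ N a t₁ t₂ x).fderiv]
  simp [Pj, Qj]

theorem stmt5 (N : ℕ) (hN : 1 ≤ N) (a : Fin N → ℝ) (ha : Function.Injective a)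
    (t₁ t₂ : ℝ) (ht : ∀ j, t₁ + a j * t₂ ≠ 0) :
    ∀ x : (Fin N → ℝ) × (Fin N → ℝ),
      wPoisson (fun j => t₁ + a j * t₂) (momZ₁ N a t₁ t₂) (momZ₂ N a t₁ t₂) x
          = -2 * momZ₂ N a t₁ t₂ x
      ∧ wPoisson (fun j => t₁ + a j * t₂) (momZ₁ N a t₁ t₂) (momZ₃ N a t₁ t₂) x
          = 2 * momZ₃ N a t₁ t₂ x
      ∧ wPoisson (fun j => t₁ + a j * t₂) (momZ₂ N a t₁ t₂) (momZ₃ N a t₁ t₂) x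
          = -momZ₁ N a t₁ t₂ x := by
  refine fun x => ⟨?_, ?_, ?_⟩ <;>
  · simp only [wPoisson, pdP_Z₁, pdQ_Z₁, pdP_Z₂, pdQ_Z₂, pdP_Z₃, pdQ_Z₃, momZ₁, momZ₂, momZ₃,
      neg_mul, neg_neg, mul_neg, Finset.mul_sum, ← Finset.sum_neg_distrib]
    refine Finset.sum_congr rfl fun j _ => ?_
    field_simp [ht j]
    ring
end
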